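/- Let s be a list of natural numbers with C(s) = 1 that is not a well-formed expression. Then s can be written as s = u ++ v where u is a nonempty concatenation of well-formed expressions, v is nonempty, C(v) ≤ 0, and no nonempty prefix of v is a well-formed expression; moreover the list v ++ u is a well-formed expression. -/

import Mathlib

/-- `C v` is the length of `v` minus the sum of its entries. -/
def C (v : List ℕ) : ℤ := (v.length : ℤ) - (v.sum : ℤ)

/-- A list of natural numbers is a well-formed expression (Polish notation
encoding of an ordered rooted tree by outdegrees) if it is of the form
`d :: (w₁ ++ ⋯ ++ w_d)` where each `wᵢ` is a well-formed expression. -/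
inductive IsWF : List ℕ → Prop
  | node (d : ℕ) (ws : List (List ℕ)) (hlen : ws.length = d)
      (h : ∀ w ∈ ws, IsWF w) : IsWF (d :: ws.flatten)

/-- The `k`-rotation of `s = u ++ v` with `v` of length `k` is `v ++ u`. -/
def krot (k : ℕ) (s : List ℕ) : List ℕ :=
  s.drop (s.length - k) ++ s.take (s.length - k)

lemma C_nil : C ([] : List ℕ) = 0 := rfl

lemma C_append (a b : List ℕ) : C (a ++ b) = C a + C b := by
  simp [C]; ring

lemma C_cons (a : ℕ) (t : List ℕ) : C (a :: t) = 1 - a + C t := by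
  simp [C]; ring

def Spec (w : List ℕ) : Prop := C w = 1 ∧ ∀ p, p <+: w → p ≠ w → C p ≤ 0

lemma flat_spec (ws : List (List ℕ)) (h : ∀ w ∈ ws, Spec w) :
    C ws.flatten = ws.length ∧
      ∀ q, q <+: ws.flatten → q ≠ ws.flatten → C q ≤ (ws.length : ℤ) - 1 := by
  induction ws with
  | nil => exact ⟨rfl, fun q hq hne => absurd (List.prefix_nil.mp hq) hne⟩
  | cons w tl ih =>
    obtain ⟨hC1, ihq⟩ := ih (fun x hx => h x (List.mem_cons_of_mem _ hx))
    have hw : Spec w := h w (List.mem_cons_self)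
    have hflat : (w :: tl).flatten = w ++ tl.flatten := by simp
    constructor
    · rw [hflat, C_append, hw.1, hC1]; simp only [List.length_cons]; push_cast; ring
    · intro q hq hne
      rw [hflat] at hq hne
      by_cases hle : q.length ≤ w.length
      · have hqw : q <+: w := List.prefix_of_prefix_length_le hq (List.prefix_append _ _) hle
        by_cases hqe : q = w
        · subst hqe
          have htl : tl.flatten ≠ [] := by intro h0; rw [h0] at hne; simp at hne
          have htlne : tl ≠ [] := by rintro rfl; simp at htl
          have : (1:ℤ) ≤ tl.length := by
            have := List.length_pos_iff.mpr htlne; exact_mod_cast this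
          rw [hw.1]; simp only [List.length_cons]; push_cast; omega
        · have := hw.2 q hqw hqe
          have h0 : (0:ℤ) ≤ tl.length := by positivity
          simp only [List.length_cons]; push_cast; omega
      · have hwq : w <+: q := List.prefix_of_prefix_length_le (List.prefix_append _ _) hq (by omega)
        obtain ⟨q', rfl⟩ := hwq
        have hq' : q' <+: tl.flatten := (List.prefix_append_right_inj w).mp hq
        have hq'ne : q' ≠ tl.flatten := by rintro rfl; exact hne rfl
        have := ihq q' hq' hq'ne
        rw [C_append, hw.1]; simp only [List.length_cons]; push_cast at this ⊢; omega

lemma wf_spec {w : List ℕ} (h : IsWF w) : Spec w := by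
  induction h with
  | node d ws hlen h ih =>
    obtain ⟨hC1, hq⟩ := flat_spec ws ih
    constructor
    · rw [C_cons, hC1, hlen]; ring
    · intro p hp hne
      cases p with
      | nil => simp [C_nil]
      | cons a q =>
        obtain ⟨rfl, hq'⟩ := List.cons_prefix_cons.mp hp
        have hqne : q ≠ ws.flatten := by rintro rfl; exact hne rfl
        have := hq q hq' hqne
        rw [C_cons]; rw [hlen] at this; omega

lemma wf_ne_nil {w : List ℕ} (h : IsWF w) : w ≠ [] := by
  cases h; simp

lemma split (d : ℕ) : ∀ t : List ℕ, C t = d →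
    (∀ q, q <+: t → q ≠ t → C q ≤ (d:ℤ) - 1) →
    ∃ ws : List (List ℕ), ws.length = d ∧ t = ws.flatten ∧ ∀ w ∈ ws, Spec w := by
  induction d with
  | zero =>
    intro t hCt hq
    have : t = [] := by
      by_contra hne
      have := hq [] (List.nil_prefix) (Ne.symm hne)
      simp [C_nil] at this
    exact ⟨[], rfl, by simp [this], by simp⟩
  | succ d ih =>
    intro t hCt hq
    have hex : ∃ n, 1 ≤ C (t.take n) := ⟨t.length, by rw [List.take_length, hCt]; push_cast; omega⟩
    classical
    have hnpos : 0 < Nat.find hex := by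
      rcases Nat.eq_zero_or_pos (Nat.find hex) with h0 | h0
      · exfalso
        have := Nat.find_spec hex
        rw [h0] at this; simp [C_nil] at this
      · exact h0
    obtain ⟨m, hnm⟩ : ∃ m, Nat.find hex = m + 1 := ⟨Nat.find hex - 1, by omega⟩
    have hn1 : 1 ≤ C (t.take (m+1)) := hnm ▸ Nat.find_spec hex
    have hmin : ∀ k, k < m + 1 → ¬ 1 ≤ C (t.take k) := fun k hk => Nat.find_min hex (by omega)
    have hCm : C (t.take m) ≤ 0 := by
      have := hmin m (by omega); omega
    have hCw : C (t.take (m+1)) = 1 := by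
      rw [List.take_succ] at hn1 ⊢
      cases hgm : t[m]? with
      | none =>
        exfalso
        rw [hgm] at hn1
        have h5 : C ((none : Option ℕ).toList) = 0 := by simp [C]
        rw [C_append, h5] at hn1
        omega
      | some a =>
        rw [hgm] at hn1
        have h5 : C ((some a).toList) = 1 - (a:ℤ) := by simp [C]
        rw [C_append, h5] at hn1 ⊢
        have ha : (0:ℤ) ≤ (a:ℤ) := by positivity
        omega
    set w := t.take (m+1) with hw
    have hwpre : w <+: t := List.take_prefix _ _
    obtain ⟨r, hr⟩ := hwpre
    have hwspec : Spec w := by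
      refine ⟨hCw, fun p hp hne => ?_⟩
      have hpt : p <+: t := hp.trans (List.take_prefix _ _)
      have hplen : p.length < m + 1 := by
        have h1 : p.length ≤ w.length := hp.length_le
        have h2 : p.length ≠ w.length := by
          intro he
          exact hne (List.prefix_iff_eq_take.mp hp ▸ by rw [he, List.take_length])
        have h3 : w.length ≤ m + 1 := by rw [hw]; simp [List.length_take]
        omega
      have hpe : p = t.take p.length := List.prefix_iff_eq_take.mp hpt
      have := hmin p.length hplen
      rw [← hpe] at this; omega
    have hCr : C r = d := by
      have h6 := C_append w r
      rw [hr, hCw] at h6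
      rw [h6] at hCt
      push_cast at hCt ⊢; omega
    have hrq : ∀ q, q <+: r → q ≠ r → C q ≤ (d:ℤ) - 1 := by
      intro q hqr hqne
      have h1 : w ++ q <+: t := by rw [← hr]; exact (List.prefix_append_right_inj w).mpr hqr
      have h2 : w ++ q ≠ t := by
        rw [← hr]; intro he
        exact hqne (List.append_cancel_left he)
      have := hq _ h1 h2
      rw [C_append, hCw] at this; push_cast at this ⊢; omega
    obtain ⟨ws', hlen', hflat', hspec'⟩ := ih r hCr hrq
    refine ⟨w :: ws', by simp [hlen'], ?_, ?_⟩
    · simp [← hr, hflat']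
    · intro x hx
      rcases List.mem_cons.mp hx with rfl | hx
      · exact hwspec
      · exact hspec' x hx

lemma spec_wf : ∀ n (w : List ℕ), w.length ≤ n → Spec w → IsWF w := by
  intro n
  induction n with
  | zero =>
    intro w hlen hspec
    have : w = [] := List.length_eq_zero_iff.mp (by omega)
    rw [this] at hspec
    simp [Spec, C_nil] at hspec
  | succ n ih =>
    intro w hlen hspec
    cases w with
    | nil => simp [Spec, C_nil] at hspec
    | cons a t =>
      have hCt : C t = a := by
        have := hspec.1; rw [C_cons] at this; omega
      have htq : ∀ q, q <+: t → q ≠ t → C q ≤ (a:ℤ) - 1 := by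
        intro q hq hne
        have h1 : a :: q <+: a :: t := List.cons_prefix_cons.mpr ⟨rfl, hq⟩
        have h2 : a :: q ≠ a :: t := by simpa using hne
        have := hspec.2 _ h1 h2
        rw [C_cons] at this; omega
      obtain ⟨ws, hlenws, hflat, hspecs⟩ := split a t hCt htq
      rw [hflat]
      refine IsWF.node a ws hlenws (fun x hx => ih x ?_ (hspecs x hx))
      have h1 : x.length ≤ ws.flatten.length := by
        rw [List.length_flatten]
        exact List.single_le_sum (by simp) _ (List.mem_map_of_mem hx)
      rw [← hflat] at h1
      simp at hlen; omega

lemma exists_wf_prefix : ∀ n (t : List ℕ), t.length ≤ n → 1 ≤ C t →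
    ∃ q, q <+: t ∧ IsWF q := by
  intro n
  induction n with
  | zero =>
    intro t hlen hCt
    have : t = [] := List.length_eq_zero_iff.mp (by omega)
    rw [this] at hCt; simp [C_nil] at hCt
  | succ n ih =>
    intro t hlen hCt
    by_cases h : ∀ p, p <+: t → p ≠ t → C p ≤ 0
    · have htne : t ≠ [] := by rintro rfl; simp [C_nil] at hCt
      have hdp : t.dropLast <+: t := List.dropLast_prefix t
      have hdne : t.dropLast ≠ t := by
        intro he
        have := @List.length_dropLast _ t
        rw [he] at this
        have := List.length_pos_iff.mpr htne
        omega
      have h1 := h _ hdp hdne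
      have h2 : C t = C t.dropLast + C [t.getLast htne] := by
        conv_lhs => rw [← List.dropLast_append_getLast htne]
        rw [C_append]
      have h3 : C [t.getLast htne] = 1 - (t.getLast htne : ℤ) := by simp [C]
      have hCt1 : C t = 1 := by
        have h4 : (0:ℤ) ≤ (t.getLast htne : ℤ) := by positivity
        omega
      exact ⟨t, List.prefix_refl t, spec_wf (n+1) t hlen ⟨hCt1, h⟩⟩
    · push_neg at h
      obtain ⟨p, hp, hpne, hpC⟩ := h
      have hplen : p.length ≤ n := by
        have h1 : p.length ≤ t.length := hp.length_le
        have h2 : p.length ≠ t.length := by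
          intro he
          exact hpne (List.prefix_iff_eq_take.mp hp ▸ by rw [he, List.take_length])
        omega
      obtain ⟨q, hq, hwf⟩ := ih p hplen (by omega)
      exact ⟨q, hq.trans hp, hwf⟩

lemma greedy : ∀ n (t : List ℕ), t.length ≤ n →
    ∃ (ws : List (List ℕ)) (r : List ℕ), t = ws.flatten ++ r ∧
      (∀ w ∈ ws, IsWF w) ∧ ∀ p, p <+: r → p ≠ [] → ¬ IsWF p := by
  intro n
  induction n with
  | zero =>
    intro t hlen
    have : t = [] := List.length_eq_zero_iff.mp (by omega)
    subst this
    exact ⟨[], [], by simp, by simp, fun p hp hne _ => hne (List.prefix_nil.mp hp)⟩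
  | succ n ih =>
    intro t hlen
    by_cases h : ∃ w, w <+: t ∧ IsWF w
    · obtain ⟨w, hw, hwf⟩ := h
      obtain ⟨r', rfl⟩ := hw
      have hwne : w ≠ [] := wf_ne_nil hwf
      have hr'len : r'.length ≤ n := by
        have := List.length_pos_iff.mpr hwne
        simp at hlen; omega
      obtain ⟨ws', r, heq, hwfs, hnop⟩ := ih r' hr'len
      refine ⟨w :: ws', r, by simp [heq], ?_, hnop⟩
      intro x hx
      rcases List.mem_cons.mp hx with rfl | hx
      · exact hwf
      · exact hwfs x hx
    · push_neg at h
      exact ⟨[], t, by simp, by simp, fun p hp hne hwf => h p hp hwf⟩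

theorem stmt_7 (s : List ℕ) (hC : C s = 1) (hs : ¬ IsWF s) :
    ∃ u v : List ℕ, s = u ++ v ∧
      (∃ ws : List (List ℕ), ws ≠ [] ∧ (∀ w ∈ ws, IsWF w) ∧ u = ws.flatten) ∧
      v ≠ [] ∧ C v ≤ 0 ∧
      (∀ p : List ℕ, p <+: v → p ≠ [] → ¬ IsWF p) ∧
      IsWF (v ++ u) := by
  obtain ⟨ws, v, heq, hwfs, hnop⟩ := greedy s.length s le_rfl
  have hspecs : ∀ w ∈ ws, Spec w := fun w hw => wf_spec (hwfs w hw)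
  obtain ⟨hCu, hqu⟩ := flat_spec ws hspecs
  -- ws ≠ []
  have hwsne : ws ≠ [] := by
    rintro rfl
    simp only [List.flatten_nil, List.nil_append] at heq
    obtain ⟨q, hq, hwf⟩ := exists_wf_prefix s.length s le_rfl (by omega)
    rw [← heq] at hnop
    exact hnop q hq (wf_ne_nil hwf) hwf
  -- v ≠ []
  have hvne : v ≠ [] := by
    rintro rfl
    rw [heq, List.append_nil] at hC hs
    rw [hCu] at hC
    have hlen1 : ws.length = 1 := by exact_mod_cast hC
    obtain ⟨w, rfl⟩ : ∃ w, ws = [w] := List.length_eq_one_iff.mp hlen1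
    rw [show ([w]).flatten = w by simp] at hs
    exact hs (hwfs w (by simp))
  have hCv : C v = 1 - ws.length := by
    rw [heq, C_append, hCu] at hC; omega
  have hk1 : (1:ℤ) ≤ ws.length := by
    have := List.length_pos_iff.mpr hwsne; exact_mod_cast this
  -- no prefix of v has C ≥ 1
  have hvpC : ∀ p, p <+: v → C p ≤ 0 := by
    intro p hp
    by_contra hc
    push_neg at hc
    obtain ⟨q, hq, hwf⟩ := exists_wf_prefix p.length p le_rfl (by omega)
    exact hnop q (hq.trans hp) (wf_ne_nil hwf) hwf
  refine ⟨ws.flatten, v, heq, ⟨ws, hwsne, hwfs, rfl⟩, hvne, by omega, hnop, ?_⟩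
  apply spec_wf (v ++ ws.flatten).length _ le_rfl
  constructor
  · rw [C_append, hCv, hCu]; ring
  · intro p hp hne
    by_cases hle : p.length ≤ v.length
    · exact hvpC p (List.prefix_of_prefix_length_le hp (List.prefix_append _ _) hle)
    · have hvp : v <+: p := List.prefix_of_prefix_length_le (List.prefix_append _ _) hp (by omega)
      obtain ⟨q, rfl⟩ := hvp
      have hq : q <+: ws.flatten := (List.prefix_append_right_inj v).mp hp
      have hqne : q ≠ ws.flatten := by rintro rfl; exact hne rfl
      have := hqu q hq hqne
      rw [C_append, hCv]; omega
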